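/- Fix r > 0 and real a ≥ 2. The set of ζ ∈ ℂ with |ζ| < r such that there exists a constant A > 0 with log|P(ζ)| ≥ -A·d·(d^{a-1}·log‖P‖ + d·log d + 1) for every nonzero P ∈ ℤ[z] of degree d ≥ 1, is of full Lebesgue measure in Δ_r. -/

import Mathlib

open MeasureTheory

/-- The height of an integer polynomial: the maximum of the absolute values of
its coefficients. -/
noncomputable def heightZ (P : Polynomial ℤ) : ℕ :=
  P.support.sup fun i => (P.coeff i).natAbs

open Polynomial Filter
open scoped ENNReal NNReal

namespace Spts


lemma one_le_heightZ {P : Polynomial ℤ} (hP : P ≠ 0) : 1 ≤ heightZ P := by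
  obtain ⟨i, hi⟩ := Polynomial.support_nonempty.mpr hP
  have h1 : 1 ≤ (P.coeff i).natAbs :=
    Int.natAbs_pos.mpr (Polynomial.mem_support_iff.mp hi)
  exact le_trans h1 (Finset.le_sup (f := fun i => (P.coeff i).natAbs) hi)

lemma coeff_natAbs_le (P : Polynomial ℤ) (i : ℕ) : (P.coeff i).natAbs ≤ heightZ P := by
  by_cases h : i ∈ P.support
  · exact Finset.le_sup (f := fun i => (P.coeff i).natAbs) h
  · simp [Polynomial.notMem_support_iff.mp h]

lemma pow_card_le_prod_real (s : Multiset ℝ) (ρ : ℝ) (hρ : 0 ≤ ρ)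
    (h : ∀ x ∈ s, ρ ≤ x) : ρ ^ (Multiset.card s) ≤ s.prod := by
  induction s using Multiset.induction_on with
  | empty => simp
  | cons a s ih =>
    have ha := h a (Multiset.mem_cons_self a s)
    have hs := ih (fun x hx => h x (Multiset.mem_cons_of_mem hx))
    have h1 : (0:ℝ) ≤ ρ ^ Multiset.card s := pow_nonneg hρ _
    rw [Multiset.card_cons, Multiset.prod_cons, pow_succ, mul_comm (ρ ^ Multiset.card s) ρ]
    exact mul_le_mul ha hs h1 (hρ.trans ha)

lemma exists_root_near {P : Polynomial ℤ} (hP : P ≠ 0) {ζ : ℂ} {ρ : ℝ} (hρ : 0 < ρ)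
    (h : ‖Polynomial.aeval ζ P‖ < ρ ^ P.natDegree) :
    ∃ z ∈ (P.map (algebraMap ℤ ℂ)).roots, ‖ζ - z‖ < ρ := by
  set p := P.map (algebraMap ℤ ℂ) with hpdef
  have hinj : Function.Injective (algebraMap ℤ ℂ) := Int.cast_injective
  have hp0 : p ≠ 0 := (Polynomial.map_ne_zero_iff hinj).mpr hP
  have hd : p.natDegree = P.natDegree := Polynomial.natDegree_map_eq_of_injective hinj P
  have hsplit : p.Splits := IsAlgClosed.splits p
  have hcard : Multiset.card p.roots = P.natDegree := by
    rw [← hd]; exact Polynomial.splits_iff_card_roots.mp hsplit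
  have heval : Polynomial.aeval ζ P = Polynomial.eval ζ p := by
    rw [hpdef, Polynomial.eval_map, Polynomial.aeval_def]
  by_contra hcon
  push_neg at hcon
  have hlc : (1:ℝ) ≤ ‖p.leadingCoeff‖ := by
    rw [hpdef, Polynomial.leadingCoeff_map_of_injective hinj]
    have h0 : P.leadingCoeff ≠ 0 := Polynomial.leadingCoeff_ne_zero.mpr hP
    have : ((1:ℤ):ℝ) ≤ |((P.leadingCoeff : ℤ):ℝ)| := by
      rw [← Int.cast_abs]
      exact_mod_cast Int.one_le_abs h0
    simpa [Complex.norm_intCast] using this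
  have habs : ‖Polynomial.eval ζ p‖
      = ‖p.leadingCoeff‖ * ((p.roots.map fun z => ‖ζ - z‖).prod) := by
    conv_lhs => rw [hsplit.eq_prod_roots]
    rw [Polynomial.eval_mul, Polynomial.eval_C, norm_mul]
    congr 1
    rw [Polynomial.eval_multiset_prod, ← normHom_apply, map_multiset_prod]
    rw [Multiset.map_map, Multiset.map_map]
    congr 1
    ext z
    simp
  have hprod : ρ ^ P.natDegree ≤ (p.roots.map fun z => ‖ζ - z‖).prod := by
    have := pow_card_le_prod_real (p.roots.map fun z => ‖ζ - z‖) ρ hρ.le ?_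
    · rwa [Multiset.card_map, hcard] at this
    · intro x hx
      obtain ⟨z, hz, rfl⟩ := Multiset.mem_map.mp hx
      exact hcon z hz
  have : ρ ^ P.natDegree ≤ ‖Polynomial.aeval ζ P‖ := by
    rw [heval, habs]
    calc ρ ^ P.natDegree ≤ (p.roots.map fun z => ‖ζ - z‖).prod := hprod
      _ ≤ ‖p.leadingCoeff‖ * _ := le_mul_of_one_le_left (le_trans (pow_nonneg hρ.le _) hprod) hlc
  exact absurd h (not_lt.mpr this)

lemma volume_small_le {P : Polynomial ℤ} (hP : P ≠ 0) {ρ : ℝ} (hρ : 0 < ρ) :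
    volume {ζ : ℂ | ‖Polynomial.aeval ζ P‖ < ρ ^ P.natDegree}
      ≤ (P.natDegree : ℝ≥0∞) * (ENNReal.ofReal ρ ^ 2 * NNReal.pi) := by
  set p := P.map (algebraMap ℤ ℂ) with hpdef
  have hsub : {ζ : ℂ | ‖Polynomial.aeval ζ P‖ < ρ ^ P.natDegree}
      ⊆ ⋃ z ∈ p.roots.toFinset, Metric.ball z ρ := by
    intro ζ hζ
    obtain ⟨z, hz, hlt⟩ := exists_root_near hP hρ hζ
    exact Set.mem_biUnion (Multiset.mem_toFinset.mpr hz)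
      (by rwa [Metric.mem_ball, Complex.dist_eq])
  have hcard : (p.roots.toFinset.card : ℝ≥0∞) ≤ (P.natDegree : ℝ≥0∞) := by
    have h1 : p.roots.toFinset.card ≤ Multiset.card p.roots := Multiset.toFinset_card_le _
    have h2 : Multiset.card p.roots ≤ p.natDegree := Polynomial.card_roots' p
    have h3 : p.natDegree = P.natDegree :=
      Polynomial.natDegree_map_eq_of_injective Int.cast_injective P
    exact_mod_cast (h1.trans h2).trans_eq h3
  calc volume {ζ : ℂ | ‖Polynomial.aeval ζ P‖ < ρ ^ P.natDegree}
      ≤ volume (⋃ z ∈ p.roots.toFinset, Metric.ball z ρ) := measure_mono hsub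
    _ ≤ ∑ z ∈ p.roots.toFinset, volume (Metric.ball z ρ) := measure_biUnion_finset_le _ _
    _ = (p.roots.toFinset.card : ℝ≥0∞) * (ENNReal.ofReal ρ ^ 2 * NNReal.pi) := by
        simp [Complex.volume_ball, Finset.sum_const, nsmul_eq_mul]
    _ ≤ (P.natDegree : ℝ≥0∞) * (ENNReal.ofReal ρ ^ 2 * NNReal.pi) := by
        exact mul_le_mul_left hcard _


noncomputable def polyOf (d : ℕ) (c : Fin (d+1) → ℤ) : Polynomial ℤ :=
  ∑ i : Fin (d+1), Polynomial.C (c i) * Polynomial.X ^ (i : ℕ)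

lemma polyOf_coeff (d : ℕ) (c : Fin (d+1) → ℤ) (j : Fin (d+1)) :
    (polyOf d c).coeff j = c j := by
  rw [polyOf, Polynomial.finset_sum_coeff]
  have : ∀ i : Fin (d+1),
      (Polynomial.C (c i) * Polynomial.X ^ (i:ℕ)).coeff (j:ℕ)
        = if j = i then c i else 0 := by
    intro i
    rw [Polynomial.coeff_C_mul, Polynomial.coeff_X_pow]
    simp [Fin.val_eq_val, eq_comm]
  simp only [this]
  simp

lemma polyOf_natDegree_le (d : ℕ) (c : Fin (d+1) → ℤ) : (polyOf d c).natDegree ≤ d := by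
  apply Polynomial.natDegree_sum_le_of_forall_le
  intro i _
  exact (Polynomial.natDegree_C_mul_X_pow_le _ _).trans (Nat.lt_succ_iff.mp i.isLt)

lemma polyOf_natDegree (d : ℕ) (c : Fin (d+1) → ℤ) (hlast : c (Fin.last d) ≠ 0) :
    (polyOf d c).natDegree = d := by
  refine le_antisymm (polyOf_natDegree_le d c) ?_
  apply Polynomial.le_natDegree_of_ne_zero
  have := polyOf_coeff d c (Fin.last d)
  simpa [Fin.last] using this ▸ hlast

lemma polyOf_ne_zero (d : ℕ) (c : Fin (d+1) → ℤ) (hlast : c (Fin.last d) ≠ 0) :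
    polyOf d c ≠ 0 := by
  intro h
  apply hlast
  have := polyOf_coeff d c (Fin.last d)
  rw [h] at this
  simpa using this.symm

lemma polyOf_eq (P : Polynomial ℤ) (hP : P ≠ 0) :
    polyOf P.natDegree (fun i => P.coeff i) = P := by
  rw [polyOf, Fin.sum_univ_eq_sum_range (fun i => Polynomial.C (P.coeff i) * Polynomial.X ^ i)]
  have := (Polynomial.as_sum_range' P _ (Nat.lt_succ_self P.natDegree)).symm
  simp only [← Polynomial.C_mul_X_pow_eq_monomial] at this
  exact this



noncomputable def fr (k : ℤ) : ℝ := ((max k.natAbs 1 : ℕ) : ℝ)⁻¹ ^ 2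

noncomputable def w1 (k : ℤ) : ℝ≥0∞ := ENNReal.ofReal (fr k)

lemma fr_nonneg (k : ℤ) : 0 ≤ fr k := by simp only [fr]; positivity

lemma ofReal_prod_of_nonneg {ι : Type*} (s : Finset ι) (f : ι → ℝ) (hf : ∀ i ∈ s, 0 ≤ f i) :
    ENNReal.ofReal (∏ i ∈ s, f i) = ∏ i ∈ s, ENNReal.ofReal (f i) := by
  induction s using Finset.cons_induction with
  | empty => simp
  | cons a s ha ih =>
    rw [Finset.prod_cons, Finset.prod_cons, ENNReal.ofReal_mul (hf a (Finset.mem_cons_self a s)),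
      ih (fun i hi => hf i (Finset.mem_cons_of_mem hi))]

lemma frnat (n : ℕ) : fr (n : ℤ) = ((max n 1 : ℕ) : ℝ)⁻¹ ^ 2 := by
  simp [fr]

-- partial sums of fr over ℕ are at most 3
lemma sum_range_fr_le (N : ℕ) : ∑ i ∈ Finset.range N, fr (i : ℤ) ≤ 3 := by
  have key : ∀ M : ℕ, ∑ i ∈ Finset.range (M + 2), fr (i : ℤ) ≤ 3 - ((M : ℝ) + 1)⁻¹ := by
    intro M
    induction M with
    | zero =>
      norm_num [Finset.sum_range_succ, frnat]
    | succ M ih =>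
      rw [Finset.sum_range_succ]
      have h1 : fr ((M + 2 : ℕ) : ℤ) = (((M:ℝ) + 2) ^ 2)⁻¹ := by
        rw [frnat]
        have : max (M + 2) 1 = M + 2 := by omega
        rw [this]
        push_cast
        rw [← inv_pow]
      have h2 : (((M:ℝ) + 2) ^ 2)⁻¹ ≤ ((M:ℝ) + 1)⁻¹ - ((M:ℝ) + 2)⁻¹ := by
        have hM : (0:ℝ) < (M:ℝ) + 1 := by positivity
        have hM2 : (0:ℝ) < (M:ℝ) + 2 := by positivity
        have : ((M:ℝ) + 1)⁻¹ - ((M:ℝ) + 2)⁻¹ = (((M:ℝ)+1) * ((M:ℝ)+2))⁻¹ := by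
          field_simp
          ring
        rw [this]
        apply inv_anti₀ (by positivity)
        nlinarith
      rw [h1]
      push_cast
      push_cast at ih
      have e : ((M:ℝ) + 1 + 1) = (M:ℝ) + 2 := by ring
      rw [e]
      linarith
  rcases N with _ | _ | M
  · simp
  · norm_num [Finset.sum_range_one, frnat]
  · have := key M
    have h3 : (0:ℝ) ≤ ((M:ℝ) + 1)⁻¹ := by positivity
    linarith

lemma tsum_nat_w1_le (g : ℕ → ℤ) (hg : ∀ n, fr (g n) ≤ fr (n : ℤ)) :
    ∑' n : ℕ, w1 (g n) ≤ 3 := by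
  apply ENNReal.summable.tsum_le_of_sum_le
  intro s
  have hsub : s ⊆ Finset.range (s.sup id + 1) := fun i hi =>
    Finset.mem_range.mpr (Nat.lt_succ_of_le (Finset.le_sup (f := id) hi))
  calc ∑ i ∈ s, w1 (g i) ≤ ∑ i ∈ Finset.range (s.sup id + 1), w1 (g i) :=
        Finset.sum_le_sum_of_subset hsub
    _ = ENNReal.ofReal (∑ i ∈ Finset.range (s.sup id + 1), fr (g i)) := by
        rw [ENNReal.ofReal_sum_of_nonneg (fun i _ => fr_nonneg _)]
        rfl
    _ ≤ ENNReal.ofReal 3 := by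
        apply ENNReal.ofReal_le_ofReal
        exact le_trans (Finset.sum_le_sum fun i _ => hg i) (sum_range_fr_le _)
    _ ≤ 3 := by
        rw [ENNReal.ofReal_ofNat]

lemma tsum_int_w1_le : ∑' k : ℤ, w1 k ≤ 6 := by
  have h := (tsum_nat_add_neg_add_one (f := w1) ENNReal.summable).symm
  have hsplit : ∑' k : ℤ, w1 k = ∑' n : ℕ, w1 (n : ℤ) + ∑' n : ℕ, w1 (-((n : ℤ) + 1)) := by
    rw [h, ENNReal.tsum_add]
  rw [hsplit]
  have h1 : ∑' n : ℕ, w1 (n : ℤ) ≤ 3 := tsum_nat_w1_le (fun n => (n : ℤ)) (fun n => le_refl _)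
  have h2 : ∑' n : ℕ, w1 (-((n : ℤ) + 1)) ≤ 3 := by
    apply tsum_nat_w1_le
    intro n
    rw [frnat]
    have : (-((n : ℤ) + 1)).natAbs = n + 1 := by omega
    rw [fr, this]
    apply pow_le_pow_left₀ (by positivity)
    apply inv_anti₀ (by positivity)
    have : max n 1 ≤ max (n+1) 1 := by omega
    exact_mod_cast this
  calc _ ≤ (3 : ℝ≥0∞) + 3 := add_le_add h1 h2
    _ = 6 := by norm_num

lemma tsum_pi_le (K : ℝ≥0∞) (hK : ∑' k : ℤ, w1 k ≤ K) (m : ℕ) :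
    ∑' c : Fin m → ℤ, ∏ i, w1 (c i) ≤ K ^ m := by
  induction m with
  | zero =>
    have : ∑' c : Fin 0 → ℤ, ∏ i, w1 (c i) = 1 := by
      rw [tsum_eq_single (default : Fin 0 → ℤ)]
      · simp
      · intro b hb
        exact absurd (Subsingleton.elim b default) hb
    rw [this, pow_zero]
  | succ m ih =>
    have he := (Fin.consEquiv (fun _ : Fin (m+1) => ℤ)).tsum_eq
      (f := fun c : Fin (m+1) → ℤ => ∏ i, w1 (c i))
    rw [← he]
    have hval : ∀ p : ℤ × (Fin m → ℤ),
        (∏ i, w1 ((Fin.consEquiv (fun _ : Fin (m+1) => ℤ)) p i))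
          = w1 p.1 * ∏ i, w1 (p.2 i) := by
      intro p
      rw [Fin.prod_univ_succ]
      simp [Fin.consEquiv]
    calc ∑' p : ℤ × (Fin m → ℤ), ∏ i, w1 ((Fin.consEquiv (fun _ : Fin (m+1) => ℤ)) p i)
        = ∑' p : ℤ × (Fin m → ℤ), w1 p.1 * ∏ i, w1 (p.2 i) := by
          exact tsum_congr hval
      _ = ∑' k : ℤ, ∑' c : Fin m → ℤ, w1 k * ∏ i, w1 (c i) := ENNReal.tsum_prod'
      _ = ∑' k : ℤ, w1 k * ∑' c : Fin m → ℤ, ∏ i, w1 (c i) := by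
          exact tsum_congr fun k => ENNReal.tsum_mul_left
      _ = (∑' k : ℤ, w1 k) * ∑' c : Fin m → ℤ, ∏ i, w1 (c i) := ENNReal.tsum_mul_right
      _ ≤ K * K ^ m := mul_le_mul' hK ih
      _ = K ^ (m + 1) := (pow_succ' K m).symm

-- geometric bound for the degree factor
lemma nat_bound (d : ℕ) (hd : 2 ≤ d) : d * 6 ^ (d+1) * 4 ^ d ≤ 48 * 3 ^ d * d ^ (4*d) := by
  have h1 : d ≤ 2 ^ d := Nat.le_of_lt Nat.lt_two_pow_self
  have h2 : 16 ^ d ≤ d ^ (4 * d) := by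
    rw [pow_mul]
    refine Nat.pow_le_pow_left ?_ d
    calc 16 = 2 ^ 4 := by norm_num
      _ ≤ d ^ 4 := Nat.pow_le_pow_left hd 4
  calc d * 6 ^ (d+1) * 4 ^ d = 6 * (d * (24 : ℕ) ^ d) := by
        rw [pow_succ]
        rw [show (24:ℕ)^d = 6^d * 4^d by rw [← mul_pow]; norm_num]
        ring
    _ ≤ 6 * (2 ^ d * 24 ^ d) := by
        exact Nat.mul_le_mul_left 6 (Nat.mul_le_mul_right _ h1)
    _ = 6 * 48 ^ d := by rw [← mul_pow]; norm_num
    _ ≤ 48 * (3 ^ d * 16 ^ d) := by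
        rw [← mul_pow]
        exact Nat.mul_le_mul (by norm_num) (le_refl _)
    _ ≤ 48 * (3 ^ d * d ^ (4*d)) := Nat.mul_le_mul_left _ (Nat.mul_le_mul_left _ h2)
    _ = 48 * 3 ^ d * d ^ (4*d) := by ring

lemma term_bound (d : ℕ) :
    (d : ℝ≥0∞) * ENNReal.ofReal (Real.exp (-(4*(d:ℝ)) * Real.log d)) * 6 ^ (d+1)
      ≤ 48 * ENNReal.ofReal (3/4) ^ d := by
  rcases Nat.eq_zero_or_pos d with h0 | h0
  · subst h0; simp
  -- real inequality
  have hd1 : (1:ℝ) ≤ (d:ℝ) := by exact_mod_cast h0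
  have hexp : Real.exp (-(4*(d:ℝ)) * Real.log d) = (((d:ℝ)) ^ (4*d))⁻¹ := by
    rw [neg_mul, Real.exp_neg]
    congr 1
    have : (4*(d:ℝ)) * Real.log d = ((4*d : ℕ) : ℝ) * Real.log d := by push_cast; ring
    rw [this, Real.exp_nat_mul, Real.exp_log (by linarith)]
  have hreal : (d:ℝ) * (((d:ℝ)) ^ (4*d))⁻¹ * 6 ^ (d+1) ≤ 48 * (3/4) ^ d := by
    rcases eq_or_lt_of_le (show 1 ≤ d from h0) with h1 | h2
    · rw [← h1]; norm_num
    · have hd2 : 2 ≤ d := h2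
      have hnat := nat_bound d hd2
      have hr : (d:ℝ) * 6 ^ (d+1) * 4 ^ d ≤ 48 * 3 ^ d * (d:ℝ) ^ (4*d) := by
        exact_mod_cast hnat
      have hD : (0:ℝ) < (d:ℝ) ^ (4*d) := by positivity
      rw [div_pow]
      have e1 : (d:ℝ) * ((d:ℝ) ^ (4*d))⁻¹ * 6 ^ (d+1)
          = ((d:ℝ) * 6 ^ (d+1)) / ((d:ℝ) ^ (4*d)) := by ring
      rw [e1, div_le_iff₀ hD]
      have e2 : 48 * ((3:ℝ) ^ d / 4 ^ d) * (d:ℝ) ^ (4*d)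
          = (48 * 3 ^ d * (d:ℝ) ^ (4*d)) / 4 ^ d := by ring
      rw [e2, le_div_iff₀ (by positivity)]
      linarith
  have h6 : (6 : ℝ≥0∞) ^ (d+1) = ENNReal.ofReal ((6:ℝ) ^ (d+1)) := by
    rw [ENNReal.ofReal_pow (by norm_num), ENNReal.ofReal_ofNat]
  have hdc : (d : ℝ≥0∞) = ENNReal.ofReal (d:ℝ) := (ENNReal.ofReal_natCast d).symm
  calc (d : ℝ≥0∞) * ENNReal.ofReal (Real.exp (-(4*(d:ℝ)) * Real.log d)) * 6 ^ (d+1)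
      = ENNReal.ofReal (d:ℝ) * ENNReal.ofReal ((((d:ℝ)) ^ (4*d))⁻¹)
          * ENNReal.ofReal ((6:ℝ) ^ (d+1)) := by rw [hexp, h6, hdc]
    _ = ENNReal.ofReal ((d:ℝ) * (((d:ℝ)) ^ (4*d))⁻¹ * 6 ^ (d+1)) := by
        rw [← ENNReal.ofReal_mul (by positivity), ← ENNReal.ofReal_mul (by positivity)]
    _ ≤ ENNReal.ofReal (48 * (3/4) ^ d) := ENNReal.ofReal_le_ofReal hreal
    _ = 48 * ENNReal.ofReal (3/4) ^ d := by
        rw [ENNReal.ofReal_mul (by norm_num), ENNReal.ofReal_pow (by norm_num),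
          ENNReal.ofReal_ofNat]
noncomputable def Phi (a : ℝ) (P : Polynomial ℤ) : ℝ :=
  (P.natDegree : ℝ) ^ (a - 1) * Real.log (heightZ P)
    + (P.natDegree : ℝ) * Real.log (P.natDegree : ℝ) + 1

def Sset (a : ℝ) (n : ℕ) (P : Polynomial ℤ) : Set ℂ :=
  {ζ | Real.log ‖Polynomial.aeval ζ P‖ < -(n:ℝ) * (P.natDegree : ℝ) * Phi a P}

lemma key (a : ℝ) (ha : 2 ≤ a) (n : ℕ) (hn : 2 ≤ n) (d : ℕ) (hd : 1 ≤ d)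
    (c : Fin (d+1) → ℤ) (hlast : c (Fin.last d) ≠ 0) :
    volume (Sset a n (polyOf d c))
      ≤ ENNReal.ofReal (Real.exp (-2*(n:ℝ)))
        * ((d:ℝ≥0∞) * ENNReal.ofReal (Real.exp (-(4*(d:ℝ)) * Real.log d))
            * ENNReal.ofReal Real.pi * ∏ i, w1 (c i)) := by
  set P := polyOf d c with hPdef
  have hP0 : P ≠ 0 := polyOf_ne_zero d c hlast
  have hdeg : P.natDegree = d := polyOf_natDegree d c hlast
  set H : ℕ := heightZ P with hHdef
  have hH : 1 ≤ H := one_le_heightZ hP0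
  have hH1 : (1:ℝ) ≤ (H:ℝ) := by exact_mod_cast hH
  have hd1 : (1:ℝ) ≤ (d:ℝ) := by exact_mod_cast hd
  have hlogH : 0 ≤ Real.log H := Real.log_nonneg hH1
  have hlogd : 0 ≤ Real.log d := Real.log_nonneg hd1
  set ρ : ℝ := Real.exp (-(n:ℝ) * Phi a P) with hρdef
  have hρ : 0 < ρ := Real.exp_pos _
  -- step 1 : inclusion
  have hsub : Sset a n P ⊆ {ζ : ℂ | ‖Polynomial.aeval ζ P‖ < ρ ^ P.natDegree} := by
    intro ζ hζ
    have hρd : ρ ^ P.natDegree = Real.exp (-(n:ℝ) * (P.natDegree : ℝ) * Phi a P) := by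
      rw [hρdef, ← Real.exp_nat_mul]
      congr 1
      ring
    rcases eq_or_lt_of_le (norm_nonneg (Polynomial.aeval ζ P)) with h | h
    · show ‖Polynomial.aeval ζ P‖ < ρ ^ P.natDegree
      rw [← h]
      positivity
    · show ‖Polynomial.aeval ζ P‖ < ρ ^ P.natDegree
      rw [hρd]
      exact (Real.log_lt_iff_lt_exp h).mp hζ
  -- step 2 : measure bound
  have hvol : volume (Sset a n P) ≤ (d : ℝ≥0∞) * (ENNReal.ofReal ρ ^ 2 * NNReal.pi) := by
    calc volume (Sset a n P) ≤ volume {ζ : ℂ | ‖Polynomial.aeval ζ P‖ < ρ ^ P.natDegree} :=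
          measure_mono hsub
      _ ≤ (P.natDegree : ℝ≥0∞) * (ENNReal.ofReal ρ ^ 2 * NNReal.pi) := volume_small_le hP0 hρ
      _ = (d : ℝ≥0∞) * (ENNReal.ofReal ρ ^ 2 * NNReal.pi) := by rw [hdeg]
  -- step 3 : real estimate on ρ²
  have hr : ρ ^ 2 ≤ Real.exp (-2*(n:ℝ)) * Real.exp (-(4*(d:ℝ)) * Real.log d)
      * Real.exp (-(4*(d:ℝ)) * Real.log H) := by
    rw [hρdef, ← Real.exp_nat_mul, ← Real.exp_add, ← Real.exp_add]
    apply Real.exp_le_exp.mpr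
    have hpow : (d:ℝ) ≤ (d:ℝ) ^ (a - 1) := by
      have := Real.rpow_le_rpow_of_exponent_le hd1 (by linarith : (1:ℝ) ≤ a - 1)
      rwa [Real.rpow_one] at this
    have hn4 : (4:ℝ) ≤ 2 * (n:ℝ) := by
      have : (2:ℝ) ≤ (n:ℝ) := by exact_mod_cast hn
      linarith
    have h1 : 4 * ((d:ℝ) * Real.log H) ≤ 2 * (n:ℝ) * ((d:ℝ) ^ (a-1) * Real.log H) := by
      have hA : (d:ℝ) * Real.log H ≤ (d:ℝ) ^ (a-1) * Real.log H :=
        mul_le_mul_of_nonneg_right hpow hlogH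
      have hA0 : 0 ≤ (d:ℝ) * Real.log H := by positivity
      calc 4 * ((d:ℝ) * Real.log H) ≤ (2 * (n:ℝ)) * ((d:ℝ) * Real.log H) :=
            mul_le_mul_of_nonneg_right hn4 hA0
        _ ≤ 2 * (n:ℝ) * ((d:ℝ) ^ (a-1) * Real.log H) :=
            mul_le_mul_of_nonneg_left hA (by linarith)
    have h2 : 4 * ((d:ℝ) * Real.log d) ≤ 2 * (n:ℝ) * ((d:ℝ) * Real.log d) := by
      have hB0 : 0 ≤ (d:ℝ) * Real.log d := by positivity
      exact mul_le_mul_of_nonneg_right hn4 hB0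
    have hPhi : Phi a P = (d:ℝ) ^ (a-1) * Real.log H + (d:ℝ) * Real.log d + 1 := by
      rw [Phi, hdeg, ← hHdef]
    rw [hPhi]
    push_cast
    nlinarith [h1, h2]
  -- step 4 : product bound
  have hw : ENNReal.ofReal (Real.exp (-(4*(d:ℝ)) * Real.log H)) ≤ ∏ i, w1 (c i) := by
    have hexpH : Real.exp (-(4*(d:ℝ)) * Real.log H) = (((H:ℝ)) ^ (4*d))⁻¹ := by
      rw [neg_mul, Real.exp_neg]
      congr 1
      have : (4*(d:ℝ)) * Real.log H = ((4*d : ℕ) : ℝ) * Real.log H := by push_cast; ring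
      rw [this, Real.exp_nat_mul, Real.exp_log (by linarith)]
    have hprodw : (∏ i, w1 (c i)) = ENNReal.ofReal (∏ i, fr (c i)) := by
      rw [ofReal_prod_of_nonneg _ _ (fun i _ => fr_nonneg _)]
      rfl
    set M : ℕ := ∏ i, max (c i).natAbs 1 with hMdef
    have hM1 : 1 ≤ M := Finset.one_le_prod' (fun i _ => le_max_right _ _)
    have hMle : M ≤ H ^ (d+1) := by
      calc M ≤ ∏ _i : Fin (d+1), H := by
            apply Finset.prod_le_prod'
            intro i _
            have h1 : (c i).natAbs ≤ H := by
              have := coeff_natAbs_le P i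
              rwa [hPdef, polyOf_coeff d c i] at this
            exact max_le h1 hH
        _ = H ^ (d+1) := by
            rw [Finset.prod_const, Finset.card_univ, Fintype.card_fin]
    have hfr : (∏ i, fr (c i)) = (((M:ℝ)) ^ 2)⁻¹ := by
      have hM : ((M:ℝ)) = ∏ i, ((max (c i).natAbs 1 : ℕ) : ℝ) := by
        rw [hMdef]; push_cast; rfl
      rw [hM, ← Finset.prod_pow, ← Finset.prod_inv_distrib]
      simp only [fr, inv_pow]
    have hM2 : ((M:ℝ)) ^ 2 ≤ ((H:ℝ)) ^ (4*d) := by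
      have hnat : M ^ 2 ≤ H ^ (4*d) := by
        calc M ^ 2 ≤ (H ^ (d+1)) ^ 2 := Nat.pow_le_pow_left hMle 2
          _ = H ^ (2*(d+1)) := by rw [← pow_mul]; ring_nf
          _ ≤ H ^ (4*d) := Nat.pow_le_pow_right hH (by omega)
      exact_mod_cast hnat
    rw [hexpH, hprodw, hfr]
    apply ENNReal.ofReal_le_ofReal
    apply inv_anti₀ (by positivity) hM2
  -- assemble
  have hpi : (NNReal.pi : ℝ≥0∞) = ENNReal.ofReal Real.pi := by
    rw [← NNReal.coe_real_pi, ENNReal.ofReal_coe_nnreal]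
  have hmain : ENNReal.ofReal ρ ^ 2
      ≤ ENNReal.ofReal (Real.exp (-2*(n:ℝ))) * ENNReal.ofReal (Real.exp (-(4*(d:ℝ)) * Real.log d))
        * ∏ i, w1 (c i) := by
    calc ENNReal.ofReal ρ ^ 2 = ENNReal.ofReal (ρ ^ 2) := by
          rw [ENNReal.ofReal_pow hρ.le]
      _ ≤ ENNReal.ofReal (Real.exp (-2*(n:ℝ)) * Real.exp (-(4*(d:ℝ)) * Real.log d)
            * Real.exp (-(4*(d:ℝ)) * Real.log H)) := ENNReal.ofReal_le_ofReal hr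
      _ = ENNReal.ofReal (Real.exp (-2*(n:ℝ))) * ENNReal.ofReal (Real.exp (-(4*(d:ℝ)) * Real.log d))
            * ENNReal.ofReal (Real.exp (-(4*(d:ℝ)) * Real.log H)) := by
          rw [ENNReal.ofReal_mul (by positivity), ENNReal.ofReal_mul (by positivity)]
      _ ≤ _ := mul_le_mul_right hw _
  calc volume (Sset a n P) ≤ (d : ℝ≥0∞) * (ENNReal.ofReal ρ ^ 2 * NNReal.pi) := hvol
    _ ≤ (d : ℝ≥0∞) * ((ENNReal.ofReal (Real.exp (-2*(n:ℝ)))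
          * ENNReal.ofReal (Real.exp (-(4*(d:ℝ)) * Real.log d)) * ∏ i, w1 (c i))
          * ENNReal.ofReal Real.pi) := by
        rw [hpi]
        exact mul_le_mul_right (mul_le_mul_left hmain _) _
    _ = ENNReal.ofReal (Real.exp (-2*(n:ℝ)))
        * ((d:ℝ≥0∞) * ENNReal.ofReal (Real.exp (-(4*(d:ℝ)) * Real.log d))
            * ENNReal.ofReal Real.pi * ∏ i, w1 (c i)) := by ring
open Classical in
noncomputable def U (a : ℝ) (n : ℕ) (t : Σ d : ℕ, Fin (d+1) → ℤ) : Set ℂ :=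
  if 1 ≤ t.1 ∧ t.2 (Fin.last t.1) ≠ 0 then Sset a n (polyOf t.1 t.2) else ∅

noncomputable def v (t : Σ d : ℕ, Fin (d+1) → ℤ) : ℝ≥0∞ :=
  (t.1 : ℝ≥0∞) * ENNReal.ofReal (Real.exp (-(4*(t.1:ℝ)) * Real.log t.1))
    * ENNReal.ofReal Real.pi * ∏ i, w1 (t.2 i)

lemma U_vol_le (a : ℝ) (ha : 2 ≤ a) (n : ℕ) (hn : 2 ≤ n) (t : Σ d : ℕ, Fin (d+1) → ℤ) :
    volume (U a n t) ≤ ENNReal.ofReal (Real.exp (-2*(n:ℝ))) * v t := by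
  rw [U]
  split_ifs with h
  · exact key a ha n hn t.1 h.1 t.2 h.2
  · simp

lemma tsum_v_le : ∑' t : (Σ d : ℕ, Fin (d+1) → ℤ), v t
    ≤ ENNReal.ofReal Real.pi * (48 * (1 - ENNReal.ofReal (3/4))⁻¹) := by
  rw [ENNReal.tsum_sigma' v]
  have h1 : ∀ d : ℕ, ∑' c : Fin (d+1) → ℤ, v ⟨d, c⟩
      ≤ ENNReal.ofReal Real.pi * (48 * ENNReal.ofReal (3/4) ^ d) := by
    intro d
    have : ∀ c : Fin (d+1) → ℤ, v ⟨d, c⟩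
        = ((d : ℝ≥0∞) * ENNReal.ofReal (Real.exp (-(4*(d:ℝ)) * Real.log d))
            * ENNReal.ofReal Real.pi) * ∏ i, w1 (c i) := fun c => rfl
    rw [tsum_congr this, ENNReal.tsum_mul_left]
    calc ((d : ℝ≥0∞) * ENNReal.ofReal (Real.exp (-(4*(d:ℝ)) * Real.log d))
            * ENNReal.ofReal Real.pi) * ∑' c : Fin (d+1) → ℤ, ∏ i, w1 (c i)
        ≤ ((d : ℝ≥0∞) * ENNReal.ofReal (Real.exp (-(4*(d:ℝ)) * Real.log d))
            * ENNReal.ofReal Real.pi) * 6 ^ (d+1) :=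
          mul_le_mul_right (tsum_pi_le 6 tsum_int_w1_le (d+1)) _
      _ = ENNReal.ofReal Real.pi * ((d : ℝ≥0∞)
            * ENNReal.ofReal (Real.exp (-(4*(d:ℝ)) * Real.log d)) * 6 ^ (d+1)) := by ring
      _ ≤ ENNReal.ofReal Real.pi * (48 * ENNReal.ofReal (3/4) ^ d) :=
          mul_le_mul_right (term_bound d) _
  calc ∑' d : ℕ, ∑' c : Fin (d+1) → ℤ, v ⟨d, c⟩
      ≤ ∑' d : ℕ, ENNReal.ofReal Real.pi * (48 * ENNReal.ofReal (3/4) ^ d) :=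
        ENNReal.tsum_le_tsum h1
    _ = ENNReal.ofReal Real.pi * (48 * ∑' d : ℕ, ENNReal.ofReal (3/4) ^ d) := by
        rw [ENNReal.tsum_mul_left, ENNReal.tsum_mul_left]
    _ = ENNReal.ofReal Real.pi * (48 * (1 - ENNReal.ofReal (3/4))⁻¹) := by
        rw [ENNReal.tsum_geometric]


end Spts

/-- Almost every `ζ` in the disk of radius `r` is of type `S¹_a(ℂ)`: there is
`A > 0` with `log|P(ζ)| ≥ -A·d·(d^{a-1}·log‖P‖ + d·log d + 1)` for every nonzero
integer polynomial `P` of degree `d ≥ 1`. -/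
theorem S_points_full_in_disk (r : ℝ) (hr : 0 < r) (a : ℝ) (ha : 2 ≤ a) :
    volume {ζ : ℂ | ‖ζ‖ < r ∧
      ¬ ∃ A > (0 : ℝ), ∀ P : Polynomial ℤ, P ≠ 0 → 1 ≤ P.natDegree →
        Real.log ‖Polynomial.aeval ζ P‖ ≥
          -A * (P.natDegree : ℝ) *
            ((P.natDegree : ℝ) ^ (a - 1) * Real.log (heightZ P)
              + (P.natDegree : ℝ) * Real.log (P.natDegree : ℝ) + 1)} = 0 := by
  set Bad := {ζ : ℂ | ‖ζ‖ < r ∧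
      ¬ ∃ A > (0 : ℝ), ∀ P : Polynomial ℤ, P ≠ 0 → 1 ≤ P.natDegree →
        Real.log ‖Polynomial.aeval ζ P‖ ≥
          -A * (P.natDegree : ℝ) *
            ((P.natDegree : ℝ) ^ (a - 1) * Real.log (heightZ P)
              + (P.natDegree : ℝ) * Real.log (P.natDegree : ℝ) + 1)} with hBad
  set C : ℝ≥0∞ := ENNReal.ofReal Real.pi * (48 * (1 - ENNReal.ofReal (3/4))⁻¹) with hC
  have hCne : C ≠ ⊤ := by
    rw [hC]
    apply ENNReal.mul_ne_top ENNReal.ofReal_ne_top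
    apply ENNReal.mul_ne_top (by norm_num)
    rw [ENNReal.inv_ne_top]
    have hq : ENNReal.ofReal (3/4) < 1 := by
      rw [ENNReal.ofReal_lt_one]
      norm_num
    exact (tsub_pos_of_lt hq).ne'
  set q0 : ℝ≥0∞ := ENNReal.ofReal (Real.exp (-2)) with hq0
  have hq0lt : q0 < 1 := by
    rw [hq0, ENNReal.ofReal_lt_one]
    exact Real.exp_lt_one_iff.mpr (by norm_num)
  -- main bound for n ≥ 2
  have hbound : ∀ n : ℕ, 2 ≤ n → volume Bad ≤ q0 ^ n * C := by
    intro n hn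
    have hsub : Bad ⊆ ⋃ t : (Σ d : ℕ, Fin (d+1) → ℤ), Spts.U a n t := by
      intro ζ hζ
      obtain ⟨-, hne⟩ := hζ
      push_neg at hne
      obtain ⟨P, hP0, hPd, hPlt⟩ := hne (n : ℝ) (by
        have : (0:ℕ) < n := by omega
        exact_mod_cast this)
      refine Set.mem_iUnion.mpr ⟨⟨P.natDegree, fun i => P.coeff i⟩, ?_⟩
      rw [Spts.U]
      have hc : (fun i : Fin (P.natDegree+1) => P.coeff (i:ℕ)) (Fin.last P.natDegree) ≠ 0 := by
        simpa [Fin.val_last] using Polynomial.leadingCoeff_ne_zero.mpr hP0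
      rw [if_pos ⟨hPd, hc⟩]
      rw [Spts.polyOf_eq P hP0]
      simp only [Spts.Sset, Spts.Phi, Set.mem_setOf_eq]
      exact hPlt
    calc volume Bad ≤ volume (⋃ t : (Σ d : ℕ, Fin (d+1) → ℤ), Spts.U a n t) :=
          measure_mono hsub
      _ ≤ ∑' t : (Σ d : ℕ, Fin (d+1) → ℤ), volume (Spts.U a n t) := measure_iUnion_le _
      _ ≤ ∑' t : (Σ d : ℕ, Fin (d+1) → ℤ), ENNReal.ofReal (Real.exp (-2*(n:ℝ))) * Spts.v t :=
          ENNReal.tsum_le_tsum (Spts.U_vol_le a ha n hn)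
      _ = ENNReal.ofReal (Real.exp (-2*(n:ℝ))) * ∑' t : (Σ d : ℕ, Fin (d+1) → ℤ), Spts.v t :=
          ENNReal.tsum_mul_left
      _ ≤ ENNReal.ofReal (Real.exp (-2*(n:ℝ))) * C := mul_le_mul_right Spts.tsum_v_le _
      _ = q0 ^ n * C := by
          rw [hq0, ← ENNReal.ofReal_pow (Real.exp_nonneg _), ← Real.exp_nat_mul]
          congr 2
          ring
  -- conclude
  have hlim : Tendsto (fun n : ℕ => q0 ^ n * C) atTop (nhds 0) := by
    have h1 : Tendsto (fun n : ℕ => q0 ^ n) atTop (nhds 0) :=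
      ENNReal.tendsto_pow_atTop_nhds_zero_of_lt_one hq0lt
    have h2 := ENNReal.Tendsto.mul_const h1 (Or.inr hCne)
    rwa [zero_mul] at h2
  have hle : volume Bad ≤ 0 :=
    ge_of_tendsto hlim (eventually_atTop.mpr ⟨2, fun n hn => hbound n hn⟩)
  exact le_antisymm hle zero_le
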